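/- Let M ⊆ (X → Bool) be a nonempty set of assignments over a finite variable set X, let Y ⊆ X, and let M₀ ⊆ (Y → Bool) be a nonempty set such that for every β ∈ M₀ and every γ : (X \ Y) → Bool with β ∪ γ ∈ M, replacing β by any β' ∈ M₀ yields β' ∪ γ ∈ M (i.e., M is 'rectangular' over M₀). Fix α ∈ M whose restriction to Y lies in M₀, and let I be the set of α' ∈ M whose restriction to Y equals the restriction of α to Y. Then |I| · |M₀| ≤ |M|. -/

import Mathlib

/-- If M is rectangular over M₀ on the variables Y, then the number of models of M
agreeing with a fixed α ∈ M on Y, times |M₀|, is at most |M|. -/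
theorem stmt_1 {ι : Type*} [Fintype ι] [DecidableEq ι] (Y : Finset ι)
    (M : Finset (ι → Bool)) (M₀ : Finset ({v // v ∈ Y} → Bool))
    (hM : M.Nonempty) (hM₀ : M₀.Nonempty)
    (hrect : ∀ β ∈ M₀, ∀ γ : {v // v ∉ Y} → Bool,
      (fun i => if h : i ∈ Y then β ⟨i, h⟩ else γ ⟨i, h⟩) ∈ M →
      ∀ β' ∈ M₀, (fun i => if h : i ∈ Y then β' ⟨i, h⟩ else γ ⟨i, h⟩) ∈ M)
    (α : ι → Bool) (hα : α ∈ M) (hαY : (fun v : {v // v ∈ Y} => α v) ∈ M₀) :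
    (M.filter (fun α' => ∀ v : {v // v ∈ Y}, α' v = α v)).card * M₀.card ≤ M.card := by
  classical
  set I := M.filter (fun α' => ∀ v : {v // v ∈ Y}, α' v = α v) with hI
  have key : (I ×ˢ M₀).card ≤ M.card := by
    apply Finset.card_le_card_of_injOn
      (fun p i => if h : i ∈ Y then p.2 ⟨i, h⟩ else p.1 i)
    · rintro ⟨α', β'⟩ hp
      have hp : (α', β') ∈ I ×ˢ M₀ := hp; simp only [Finset.mem_product, hI, Finset.mem_filter] at hp
      obtain ⟨⟨hα'M, hα'Y⟩, hβ'⟩ := hp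
      have h1 : (fun i => if h : i ∈ Y then (fun v : {v // v ∈ Y} => α v) ⟨i, h⟩
          else (fun v : {v // v ∉ Y} => α' v) ⟨i, h⟩) ∈ M := by
        have : (fun i => if h : i ∈ Y then (fun v : {v // v ∈ Y} => α v) ⟨i, h⟩
            else (fun v : {v // v ∉ Y} => α' v) ⟨i, h⟩) = α' := by
          funext i
          by_cases h : i ∈ Y
          · simp [h, (hα'Y ⟨i, h⟩).symm]
          · simp [h]
        rw [this]; exact hα'M
      exact hrect _ hαY (fun v => α' v) h1 β' hβ'
    · rintro ⟨α₁, β₁⟩ hp ⟨α₂, β₂⟩ hq heq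
      simp only [Finset.mem_coe, Finset.mem_product, hI, Finset.mem_filter] at hp hq
      obtain ⟨⟨_, h1Y⟩, _⟩ := hp
      obtain ⟨⟨_, h2Y⟩, _⟩ := hq
      have heq' := fun i => congrFun heq i
      simp only [Prod.mk.injEq]
      constructor
      · funext i
        by_cases h : i ∈ Y
        · rw [h1Y ⟨i, h⟩, h2Y ⟨i, h⟩]
        · have := heq' i; simpa [h] using this
      · funext v
        have := heq' v.1
        simpa [v.2] using this
  simpa [Finset.card_product] using key
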